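/- Let F : ℝⁿ → ℝᵐ be continuously differentiable and X = {x | Bx = b} a nonempty affine set (B an m×n matrix). For every x̄ ∈ X, the projectional coderivative of F with respect to X at x̄ satisfies D*_X F(x̄)(y) = {proj_{ker B}(∇F(x̄)*y)}. -/

import Mathlib

open Filter Metric Set
open scoped Topology RealInnerProductSpace

noncomputable section

abbrev Eu (n : ℕ) := EuclideanSpace ℝ (Fin n)

section GeneralDefs

variable {E F : Type*} [NormedAddCommGroup E] [NormedSpace ℝ E]
  [NormedAddCommGroup F] [NormedSpace ℝ F]

/-- `v` is a proximal normal vector to `A` at `a`: for some `t > 0`,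
`a` is a nearest point of `A` to `a + t • v`. -/
def proxNormal (A : Set E) (a : E) : Set E :=
  {v | ∃ t : ℝ, 0 < t ∧ ‖t • v‖ = Metric.infDist (a + t • v) A}

/-- the set of nearest points of `K` to `x` (metric projection). -/
def projSet (K : Set E) (x : E) : Set E :=
  {y | y ∈ K ∧ ∀ z ∈ K, ‖x - y‖ ≤ ‖x - z‖}

/-- the contingent (tangent) cone to `X` at `x`. -/
def tangCone (X : Set E) (x : E) : Set E :=
  {w | ∃ (t : ℕ → ℝ) (v : ℕ → E), (∀ k, 0 < t k) ∧ Tendsto t atTop (𝓝 0) ∧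
    Tendsto v atTop (𝓝 w) ∧ ∀ k, x + t k • v k ∈ X}

/-- `A` is locally closed at `a`. -/
def LocallyClosedAt (A : Set E) (a : E) : Prop := ∃ U ∈ 𝓝 a, IsClosed (A ∩ U)

/-- the graph of the restriction `S|_X`. -/
def svGraph (S : E → Set F) (X : Set E) : Set (E × F) := {p | p.1 ∈ X ∧ p.2 ∈ S p.1}

/-- the Lipschitz-like property of `S` relative to `X` at `x₀` for `u₀` with constant `κ`. -/
def LipschitzLikeRel (S : E → Set F) (X : Set E) (x₀ : E) (u₀ : F) (κ : ℝ) : Prop :=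
  LocallyClosedAt (svGraph S univ) (x₀, u₀) ∧
  ∃ V ∈ 𝓝 x₀, ∃ W ∈ 𝓝 u₀, ∀ x ∈ X ∩ V, ∀ x' ∈ X ∩ V, ∀ u ∈ S x' ∩ W,
    ∃ u'' ∈ S x, ‖u - u''‖ ≤ κ * ‖x' - x‖

/-- the graphical modulus of `S` relative to `X` at `x₀` for `u₀` (as an extended real,
the infimum of all Lipschitz-like constants). -/
def gmod (S : E → Set F) (X : Set E) (x₀ : E) (u₀ : F) : EReal :=
  sInf {c : EReal | ∃ κ : ℝ, 0 ≤ κ ∧ c = (κ : EReal) ∧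
    ∃ V ∈ 𝓝 x₀, ∃ W ∈ 𝓝 u₀, ∀ x ∈ X ∩ V, ∀ x' ∈ X ∩ V, ∀ u ∈ S x' ∩ W,
      ∃ u'' ∈ S x, ‖u - u''‖ ≤ κ * ‖x' - x‖}

/-- the horizon cone of `A`. -/
def horizonCone (A : Set E) : Set E :=
  {w | ∃ (a : ℕ → E) (l : ℕ → ℝ), (∀ k, a k ∈ A) ∧ (∀ k, 0 < l k) ∧
    Tendsto l atTop (𝓝 0) ∧ Tendsto (fun k => l k • a k) atTop (𝓝 w)}

/-- extended-real absolute difference `|a - b|`. -/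
def eabsdiff (a b : EReal) : EReal := max (a - b) (b - a)

/-- `f` is locally Lipschitz continuous at `x₀` relative to `X`. -/
def RelLipschitzAt (f : E → EReal) (X : Set E) (x₀ : E) : Prop :=
  ∃ κ : ℝ, 0 ≤ κ ∧ ∃ V ∈ 𝓝 x₀, ∀ x ∈ X ∩ V, ∀ y ∈ X ∩ V,
    eabsdiff (f x) (f y) ≤ ((κ * ‖x - y‖ : ℝ) : EReal)

/-- the Lipschitz modulus of `f` at `x₀` relative to `X` (as an extended real). -/
def relLipMod (f : E → EReal) (X : Set E) (x₀ : E) : EReal :=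
  sInf {c : EReal | ∃ κ : ℝ, 0 ≤ κ ∧ c = (κ : EReal) ∧ ∃ V ∈ 𝓝 x₀,
    ∀ x ∈ X ∩ V, ∀ y ∈ X ∩ V, eabsdiff (f x) (f y) ≤ ((κ * ‖x - y‖ : ℝ) : EReal)}

end GeneralDefs

section InnerDefs

variable {E F : Type*} [NormedAddCommGroup E] [InnerProductSpace ℝ E]
  [NormedAddCommGroup F] [InnerProductSpace ℝ F]

/-- the regular (Fréchet) normal cone to `A ⊆ E × F` at `a`. -/
def regNormalP (A : Set (E × F)) (a : E × F) : Set (E × F) :=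
  {v | ∀ ε : ℝ, 0 < ε → ∃ δ > 0, ∀ b ∈ A, ‖b - a‖ ≤ δ →
    ⟪v.1, b.1 - a.1⟫ + ⟪v.2, b.2 - a.2⟫ ≤ ε * ‖b - a‖}

/-- the limiting (Mordukhovich) normal cone to `A ⊆ E × F` at `a`. -/
def limNormalP (A : Set (E × F)) (a : E × F) : Set (E × F) :=
  {v | ∃ (b : ℕ → E × F) (w : ℕ → E × F), (∀ k, b k ∈ A) ∧
    (∀ k, w k ∈ regNormalP A (b k)) ∧ Tendsto b atTop (𝓝 a) ∧ Tendsto w atTop (𝓝 v)}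

/-- the limiting coderivative of `S` at `x` for `u`:
`xs ∈ coderiv S x u us ↔ (xs, -us) ∈ N_{graph S}(x, u)`. -/
def coderiv (S : E → Set F) (x : E) (u : F) (us : F) : Set E :=
  {xs | (xs, -us) ∈ limNormalP (svGraph S univ) (x, u)}

/-- the projectional coderivative of `S` at `x₀` for `u₀` with respect to `X`. -/
def projCoderiv (S : E → Set F) (X : Set E) (x₀ : E) (u₀ : F) (us : F) : Set E :=
  {xs | ∃ (x : ℕ → E) (u : ℕ → F) (xv : ℕ → E) (uv : ℕ → F) (y : ℕ → E),
    (∀ k, (x k, u k) ∈ svGraph S X) ∧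
    (∀ k, (xv k, -(uv k)) ∈ limNormalP (svGraph S X) (x k, u k)) ∧
    (∀ k, y k ∈ projSet (tangCone X (x k)) (xv k)) ∧
    Tendsto x atTop (𝓝 x₀) ∧ Tendsto u atTop (𝓝 u₀) ∧
    Tendsto uv atTop (𝓝 us) ∧ Tendsto y atTop (𝓝 xs)}

/-- the regular (Fréchet) subdifferential of an extended-real-valued function. -/
def regSubdiff (g : E → EReal) (x : E) : Set E :=
  {v | ∀ ε : ℝ, 0 < ε → ∃ δ > 0, ∀ y, ‖y - x‖ ≤ δ →
    g x + ((⟪v, y - x⟫ - ε * ‖y - x‖ : ℝ) : EReal) ≤ g y}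

/-- the limiting (Mordukhovich) subdifferential. -/
def limSubdiff (g : E → EReal) (x : E) : Set E :=
  {v | ∃ (xk vk : ℕ → E), Tendsto xk atTop (𝓝 x) ∧
    Tendsto (fun k => g (xk k)) atTop (𝓝 (g x)) ∧
    (∀ k, vk k ∈ regSubdiff g (xk k)) ∧ Tendsto vk atTop (𝓝 v)}

/-- the horizon (singular) subdifferential. -/
def horizonSubdiff (g : E → EReal) (x : E) : Set E :=
  {v | ∃ (xk vk : ℕ → E) (lk : ℕ → ℝ), Tendsto xk atTop (𝓝 x) ∧
    Tendsto (fun k => g (xk k)) atTop (𝓝 (g x)) ∧ (∀ k, 0 < lk k) ∧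
    Tendsto lk atTop (𝓝 0) ∧ (∀ k, vk k ∈ regSubdiff g (xk k)) ∧
    Tendsto (fun k => lk k • vk k) atTop (𝓝 v)}

/-- the outer limiting subdifferential of `g` at `xb` with respect to `vb`. -/
def outerSubdiffWrt (g : E → EReal) (xb vb : E) : Set E :=
  {v | ∃ (xk vk : ℕ → E), Tendsto xk atTop (𝓝 xb) ∧
    Tendsto (fun k => g (xk k)) atTop (𝓝 (g xb)) ∧
    (∀ k, g xb + ((⟪vb, xk k - xb⟫ : ℝ) : EReal) < g (xk k)) ∧
    (∀ k, vk k ∈ limSubdiff g (xk k)) ∧ Tendsto vk atTop (𝓝 v)}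

/-- `D` is a convex polyhedron (finite intersection of closed half-spaces). -/
def IsPolyhedral (D : Set E) : Prop :=
  ∃ s : Finset (E × ℝ), D = {v | ∀ p ∈ s, ⟪p.1, v⟫ ≤ p.2}

/-- the support function of `D`. -/
def supportFn (D : Set E) : E → EReal :=
  fun x => sSup ((fun v => ((⟪v, x⟫ : ℝ) : EReal)) '' D)

end InnerDefs

section Aux

variable {n m p : ℕ}

lemma tangCone_affine (B : Eu n →L[ℝ] Eu p) (b : Eu p) (x : Eu n) (hx : B x = b) :
    tangCone {z : Eu n | B z = b} x = {w : Eu n | B w = 0} := by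
  ext w
  constructor
  · rintro ⟨t, v, ht, ht0, hv, hmem⟩
    have hBv : ∀ k, B (v k) = 0 := by
      intro k
      have h := hmem k
      simp only [Set.mem_setOf_eq, map_add, map_smul, hx] at h
      have h2 : t k • B (v k) = 0 := by
        have := congrArg (fun z => z - b) h
        simpa using this
      rcases smul_eq_zero.mp h2 with h1 | h1
      · exact absurd h1 (ne_of_gt (ht k))
      · exact h1
    have h1 : Tendsto (fun k => B (v k)) atTop (𝓝 (B w)) := (B.continuous.tendsto w).comp hv
    have h0 : Tendsto (fun k => B (v k)) atTop (𝓝 (0 : Eu p)) := by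
      simp only [hBv]; exact tendsto_const_nhds
    exact tendsto_nhds_unique h1 h0
  · intro hw
    simp only [Set.mem_setOf_eq] at hw
    refine ⟨fun k => ((k : ℝ) + 1)⁻¹, fun _ => w, fun k => by positivity, ?_,
      tendsto_const_nhds, ?_⟩
    · simpa [one_div] using tendsto_one_div_add_atTop_nhds_zero_nat (𝕜 := ℝ)
    · intro k
      simp only [Set.mem_setOf_eq, map_add, map_smul, hx, hw, smul_zero, add_zero]

lemma projSet_submodule (K : Submodule ℝ (Eu n)) (v : Eu n) :
    projSet (K : Set (Eu n)) v = {((K.orthogonalProjectionOnto v : K) : Eu n)} := by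
  set Pv : Eu n := ((K.orthogonalProjectionOnto v : K) : Eu n) with hPv
  have hPmem : Pv ∈ (K : Set (Eu n)) := (K.orthogonalProjectionOnto v).2
  have hperp : v - Pv ∈ Kᗮ := K.sub_starProjection_mem_orthogonal v
  have key : ∀ z ∈ K, ‖v - z‖ ^ 2 = ‖v - Pv‖ ^ 2 + ‖Pv - z‖ ^ 2 := by
    intro z hz
    have hmem : Pv - z ∈ K := K.sub_mem hPmem hz
    have hin : ⟪v - Pv, Pv - z⟫ = 0 := (Submodule.mem_orthogonal' K _).mp hperp _ hmem
    have : v - z = (v - Pv) + (Pv - z) := by abel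
    rw [this, norm_add_sq_real, hin]
    ring
  ext w
  simp only [projSet, Set.mem_setOf_eq, Set.mem_singleton_iff]
  constructor
  · rintro ⟨hwK, hmin⟩
    have h1 : ‖v - w‖ ≤ ‖v - Pv‖ := hmin _ hPmem
    have h2 := key w hwK
    have h3 : ‖Pv - w‖ ^ 2 ≤ 0 := by nlinarith [norm_nonneg (v - w), norm_nonneg (v - Pv)]
    have h4 : ‖Pv - w‖ = 0 := by nlinarith [norm_nonneg (Pv - w)]
    have := sub_eq_zero.mp (norm_eq_zero.mp h4)
    exact this.symm
  · rintro rfl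
    refine ⟨hPmem, fun z hz => ?_⟩
    have h2 := key z hz
    nlinarith [norm_nonneg (Pv - z), norm_nonneg (v - z), norm_nonneg (v - Pv)]

set_option maxHeartbeats 2000000 in
lemma regNormal_ortho (F : Eu n → Eu m) (hF : ContDiff ℝ 1 F) (B : Eu n →L[ℝ] Eu p) (b : Eu p)
    (z : Eu n) (hz : B z = b) (q : Eu n × Eu m)
    (hq : q ∈ regNormalP (svGraph (fun x => {F x}) {x : Eu n | B x = b}) (z, F z))
    (w : Eu n) (hw : B w = 0) :
    ⟪q.1, w⟫ + ⟪q.2, fderiv ℝ F z w⟫ ≤ 0 := by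
  set A := fderiv ℝ F z with hA
  have hd : HasFDerivAt F A z := (hF.differentiable one_ne_zero z).hasFDerivAt
  set s : ℕ → ℝ := fun k => (k : ℝ) + 1 with hs
  have hs_pos : ∀ k, 0 < s k := fun k => by positivity
  have hsc : Tendsto s atTop atTop := tendsto_natCast_atTop_atTop.atTop_add tendsto_const_nhds
  have hsc' : Tendsto (fun k => ‖s k‖) atTop atTop := by
    simp only [Real.norm_eq_abs]
    exact tendsto_abs_atTop_atTop.comp hsc
  set t : ℕ → ℝ := fun k => (s k)⁻¹ with htdef
  set D : ℕ → Eu m := fun k => F (z + t k • w) - F z with hD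
  have hlim : Tendsto (fun k => s k • D k) atTop (𝓝 (A w)) := hd.lim w hsc'
  have hDs : ∀ k, t k • (s k • D k) = D k := fun k => by
    rw [smul_smul, htdef, inv_mul_cancel₀ (ne_of_gt (hs_pos k)), one_smul]
  have ht0 : Tendsto t atTop (𝓝 0) := hsc.inv_tendsto_atTop
  have hD0 : Tendsto D atTop (𝓝 (0 : Eu m)) := by
    have h := ht0.smul hlim
    rw [zero_smul] at h
    exact h.congr fun k => hDs k
  have main : ∀ ε : ℝ, 0 < ε → ⟪q.1, w⟫ + ⟪q.2, A w⟫ ≤ ε * (‖w‖ + ‖A w‖) := by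
    intro ε hε
    obtain ⟨δ, hδ, hineq⟩ := hq ε hε
    have h1 : ∀ᶠ k in atTop, ‖t k • w‖ < δ := by
      have h : Tendsto (fun k => ‖t k • w‖) atTop (𝓝 0) := by
        have h' := (ht0.smul_const w).norm
        rwa [zero_smul ℝ w, norm_zero] at h'
      exact h.eventually_lt_const hδ
    have h2 : ∀ᶠ k in atTop, ‖D k‖ < δ := by
      have h := hD0.norm
      simp only [norm_zero] at h
      exact h.eventually_lt_const hδ
    have hev : ∀ᶠ k in atTop,
        ⟪q.1, w⟫ + ⟪q.2, s k • D k⟫ ≤ ε * (‖w‖ + ‖s k • D k‖) := by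
      filter_upwards [h1, h2] with k hk1 hk2
      have hmemG : (z + t k • w, F (z + t k • w)) ∈
          svGraph (fun x => ({F x} : Set (Eu m))) {x : Eu n | B x = b} := by
        refine ⟨?_, rfl⟩
        show B (z + t k • w) = b
        rw [map_add, map_smul, hz, hw, smul_zero, add_zero]
      have hsub : (z + t k • w, F (z + t k • w)) - (z, F z) = (t k • w, D k) := by
        rw [Prod.mk_sub_mk]
        congr 1
        abel
      have hnorm : ‖(z + t k • w, F (z + t k • w)) - (z, F z)‖ ≤ δ := by
        rw [hsub, Prod.norm_def]
        exact max_le (le_of_lt hk1) (le_of_lt hk2)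
      have hkey := hineq _ hmemG hnorm
      rw [hsub] at hkey
      simp only at hkey
      -- hkey : ⟪q.1, t k • w⟫ + ⟪q.2, D k⟫ ≤ ε * ‖(t k • w, D k)‖
      have hmul := mul_le_mul_of_nonneg_left hkey (le_of_lt (hs_pos k))
      have hz1 : z + t k • w - z = t k • w := by abel
      rw [hz1] at hmul
      have hL : s k * (⟪q.1, t k • w⟫ + ⟪q.2, F (z + t k • w) - F z⟫)
          = ⟪q.1, w⟫ + ⟪q.2, s k • D k⟫ := by
        rw [real_inner_smul_right, real_inner_smul_right]
        have : s k * (t k * ⟪q.1, w⟫) = ⟪q.1, w⟫ := by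
          rw [← mul_assoc, mul_inv_cancel₀ (ne_of_gt (hs_pos k)), one_mul]
        rw [mul_add, this]
      have hR : s k * (ε * ‖((t k • w, D k) : Eu n × Eu m)‖) ≤ ε * (‖w‖ + ‖s k • D k‖) := by
        rw [Prod.norm_def]
        simp only [norm_smul, Real.norm_eq_abs, abs_of_pos (hs_pos k),
          abs_of_pos (show 0 < t k from inv_pos.mpr (hs_pos k))]
        have hmax : max ((s k)⁻¹ * ‖w‖) ‖D k‖ ≤ (s k)⁻¹ * ‖w‖ + ‖D k‖ :=
          max_le (le_add_of_nonneg_right (norm_nonneg _))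
            (le_add_of_nonneg_left (by positivity))
        have hsk := hs_pos k
        have hinv : s k * (s k)⁻¹ = 1 := mul_inv_cancel₀ (ne_of_gt hsk)
        calc s k * (ε * max ((s k)⁻¹ * ‖w‖) ‖D k‖)
            ≤ s k * (ε * ((s k)⁻¹ * ‖w‖ + ‖D k‖)) := by
              apply mul_le_mul_of_nonneg_left _ (le_of_lt hsk)
              exact mul_le_mul_of_nonneg_left hmax (le_of_lt hε)
          _ = ε * (s k * (s k)⁻¹ * ‖w‖ + s k * ‖D k‖) := by ring
          _ = ε * (‖w‖ + s k * ‖D k‖) := by rw [hinv, one_mul]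
      rw [hL] at hmul
      exact hmul.trans hR
    have hLlim : Tendsto (fun k => ⟪q.1, w⟫ + ⟪q.2, s k • D k⟫) atTop
        (𝓝 (⟪q.1, w⟫ + ⟪q.2, A w⟫)) :=
      tendsto_const_nhds.add (Tendsto.inner tendsto_const_nhds hlim)
    have hRlim : Tendsto (fun k => ε * (‖w‖ + ‖s k • D k‖)) atTop
        (𝓝 (ε * (‖w‖ + ‖A w‖))) :=
      tendsto_const_nhds.mul (tendsto_const_nhds.add hlim.norm)
    exact le_of_tendsto_of_tendsto hLlim hRlim hev
  set L := ⟪q.1, w⟫ + ⟪q.2, A w⟫ with hLdef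
  set C := ‖w‖ + ‖A w‖ with hCdef
  have hC : (0:ℝ) ≤ C := by positivity
  by_contra hcon
  push_neg at hcon
  have h2 := main (L / (C + 1)) (by positivity)
  have h3 : L / (C + 1) * C < L := by
    rw [div_mul_eq_mul_div, div_lt_iff₀ (by positivity)]
    nlinarith
  linarith

lemma limNormal_ortho (F : Eu n → Eu m) (hF : ContDiff ℝ 1 F) (B : Eu n →L[ℝ] Eu p) (b : Eu p)
    (z : Eu n) (hz : B z = b) (q : Eu n × Eu m)
    (hq : q ∈ limNormalP (svGraph (fun x => {F x}) {x : Eu n | B x = b}) (z, F z))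
    (w : Eu n) (hw : B w = 0) :
    ⟪q.1, w⟫ + ⟪q.2, fderiv ℝ F z w⟫ = 0 := by
  obtain ⟨bs, ws, hbG, hwreg, hbto, hwto⟩ := hq
  have hz' : ∀ k, B (bs k).1 = b := fun k => (hbG k).1
  have hFk : ∀ k, (bs k).2 = F (bs k).1 := fun k => (hbG k).2
  have hwreg' : ∀ k, ws k ∈ regNormalP (svGraph (fun x => ({F x} : Set (Eu m)))
      {x : Eu n | B x = b}) ((bs k).1, F (bs k).1) := by
    intro k
    have h := hwreg k
    have : bs k = ((bs k).1, F (bs k).1) := by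
      rw [← hFk k]
    rwa [this] at h
  have h1 : ∀ k, ⟪(ws k).1, w⟫ + ⟪(ws k).2, fderiv ℝ F (bs k).1 w⟫ ≤ 0 := fun k =>
    regNormal_ortho F hF B b _ (hz' k) _ (hwreg' k) w hw
  have h2 : ∀ k, 0 ≤ ⟪(ws k).1, w⟫ + ⟪(ws k).2, fderiv ℝ F (bs k).1 w⟫ := by
    intro k
    have h := regNormal_ortho F hF B b _ (hz' k) _ (hwreg' k) (-w) (by rw [map_neg, hw, neg_zero])
    simp only [inner_neg_right, map_neg] at h
    linarith
  have hz_to : Tendsto (fun k => (bs k).1) atTop (𝓝 z) := by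
    have := (continuous_fst.tendsto ((z, F z) : Eu n × Eu m)).comp hbto
    exact this
  have hws1 : Tendsto (fun k => (ws k).1) atTop (𝓝 q.1) := by
    have := (continuous_fst.tendsto q).comp hwto; exact this
  have hws2 : Tendsto (fun k => (ws k).2) atTop (𝓝 q.2) := by
    have := (continuous_snd.tendsto q).comp hwto; exact this
  have hAk : Tendsto (fun k => fderiv ℝ F (bs k).1 w) atTop (𝓝 (fderiv ℝ F z w)) := by
    have hc : Continuous (fderiv ℝ F) := hF.continuous_fderiv one_ne_zero
    have hAc : Tendsto (fun k => fderiv ℝ F (bs k).1) atTop (𝓝 (fderiv ℝ F z)) :=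
      (hc.tendsto z).comp hz_to
    have happ : Continuous fun pr : (Eu n →L[ℝ] Eu m) × Eu n => pr.1 pr.2 :=
      isBoundedBilinearMap_apply.continuous
    have := (happ.tendsto (fderiv ℝ F z, w)).comp (hAc.prodMk_nhds tendsto_const_nhds)
    exact this
  have hlim : Tendsto (fun k => ⟪(ws k).1, w⟫ + ⟪(ws k).2, fderiv ℝ F (bs k).1 w⟫) atTop
      (𝓝 (⟪q.1, w⟫ + ⟪q.2, fderiv ℝ F z w⟫)) :=
    (hws1.inner tendsto_const_nhds).add (hws2.inner hAk)
  exact le_antisymm (le_of_tendsto hlim (Eventually.of_forall h1))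
    (ge_of_tendsto hlim (Eventually.of_forall h2))

end Aux

set_option maxHeartbeats 2000000 in
/-- Remark 2.2, affine case: for a `C¹` mapping `F` and a nonempty affine
set `X = {x | Bx = b}`, the projectional coderivative is the singleton
`{proj_{ker B}(∇F(x̄)*y)}`. -/
theorem projCoderiv_smooth_affine {n m p : ℕ} (F : Eu n → Eu m) (hF : ContDiff ℝ 1 F)
    (B : Eu n →L[ℝ] Eu p) (b : Eu p) (hne : {x : Eu n | B x = b}.Nonempty)
    (xb : Eu n) (hxb : B xb = b) :
    ∀ y : Eu m, projCoderiv (fun x => {F x}) {x : Eu n | B x = b} xb (F xb) y =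
      projSet {x : Eu n | B x = 0} (ContinuousLinearMap.adjoint (fderiv ℝ F xb) y) := by
  intro y
  classical
  set K : Submodule ℝ (Eu n) := LinearMap.ker (B : Eu n →ₗ[ℝ] Eu p) with hKdef
  have hKset : {x : Eu n | B x = 0} = (K : Set (Eu n)) := by
    ext x; simp [hKdef, LinearMap.mem_ker]
  set A := fderiv ℝ F xb with hAdef
  have hd : HasFDerivAt F A xb := (hF.differentiable one_ne_zero xb).hasFDerivAt
  rw [hKset, projSet_submodule]
  set Py : Eu n := ((K.orthogonalProjectionOnto (ContinuousLinearMap.adjoint A y) : K) : Eu n)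
    with hPydef
  apply Set.Subset.antisymm
  · -- ⊆
    rintro xs ⟨x, u, xv, uv, yk, hgr, hnorm, hproj, hx, hu, huv, hy⟩
    have hxX : ∀ k, B (x k) = b := fun k => (hgr k).1
    have huF : ∀ k, u k = F (x k) := fun k => (hgr k).2
    -- orthogonality from the limiting normal cone
    have hortho : ∀ k, ∀ w ∈ K, ⟪xv k - ContinuousLinearMap.adjoint (fderiv ℝ F (x k)) (uv k), w⟫ = 0 := by
      intro k w hwK
      have hwB : B w = 0 := hwK
      have hn := hnorm k
      rw [huF k] at hn
      have h0 := limNormal_ortho F hF B b (x k) (hxX k) (xv k, -(uv k)) hn w hwB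
      simp only at h0
      rw [inner_sub_left, ContinuousLinearMap.adjoint_inner_left]
      rw [inner_neg_left] at h0
      linarith
    -- identify yk
    have hyk : ∀ k, yk k =
        ((K.orthogonalProjectionOnto (ContinuousLinearMap.adjoint (fderiv ℝ F (x k)) (uv k)) : K) : Eu n) := by
      intro k
      have h := hproj k
      rw [tangCone_affine B b (x k) (hxX k), hKset, projSet_submodule] at h
      rw [Set.mem_singleton_iff] at h
      rw [h]
      congr 1
      have hdk : xv k - ContinuousLinearMap.adjoint (fderiv ℝ F (x k)) (uv k) ∈ Kᗮ := by
        rw [Submodule.mem_orthogonal']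
        exact fun u hu => hortho k u hu
      have hsplit : xv k = ContinuousLinearMap.adjoint (fderiv ℝ F (x k)) (uv k)
          + (xv k - ContinuousLinearMap.adjoint (fderiv ℝ F (x k)) (uv k)) := by abel
      rw [hsplit, map_add, Submodule.orthogonalProjectionOnto_apply_of_mem_orthogonal hdk,
        add_zero]
    -- continuity
    have hcf : Continuous (fderiv ℝ F) := hF.continuous_fderiv one_ne_zero
    have hadj : Tendsto (fun k => ContinuousLinearMap.adjoint (fderiv ℝ F (x k)))
        atTop (𝓝 (ContinuousLinearMap.adjoint A)) := by
      have hAc : Tendsto (fun k => fderiv ℝ F (x k)) atTop (𝓝 A) := (hcf.tendsto xb).comp hx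
      exact (((ContinuousLinearMap.adjoint (𝕜 := ℝ) (E := Eu n) (F := Eu m)).continuous.tendsto
        A).comp hAc)
    have happ : Tendsto (fun k => ContinuousLinearMap.adjoint (fderiv ℝ F (x k)) (uv k))
        atTop (𝓝 (ContinuousLinearMap.adjoint A y)) := by
      have hc : Continuous fun pr : (Eu m →L[ℝ] Eu n) × Eu m => pr.1 pr.2 :=
        isBoundedBilinearMap_apply.continuous
      have := (hc.tendsto (ContinuousLinearMap.adjoint A, y)).comp (hadj.prodMk_nhds huv)
      exact this
    have hPc : Continuous fun v : Eu n => ((K.orthogonalProjectionOnto v : K) : Eu n) :=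
      continuous_subtype_val.comp (K.orthogonalProjectionOnto).continuous
    have hyk_lim : Tendsto yk atTop (𝓝 Py) := by
      have := ((hPc.tendsto _).comp happ)
      refine Tendsto.congr (fun k => (hyk k).symm) ?_
      exact this
    have : xs = Py := tendsto_nhds_unique hy hyk_lim
    rw [Set.mem_singleton_iff]
    exact this
  · -- ⊇
    intro xs hxs
    rw [Set.mem_singleton_iff] at hxs
    subst hxs
    refine ⟨fun _ => xb, fun _ => F xb, fun _ => ContinuousLinearMap.adjoint A y,
      fun _ => y, fun _ => Py, fun k => ⟨hxb, rfl⟩, ?_, ?_, tendsto_const_nhds,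
      tendsto_const_nhds, tendsto_const_nhds, tendsto_const_nhds⟩
    · -- limiting normal cone membership
      intro k
      refine ⟨fun _ => (xb, F xb), fun _ => (ContinuousLinearMap.adjoint A y, -y),
        fun _ => ⟨hxb, rfl⟩, fun _ => ?_, tendsto_const_nhds, tendsto_const_nhds⟩
      -- regular normal cone membership
      intro ε hε
      have hlo : ∀ᶠ x' in 𝓝 xb, ‖F x' - F xb - A (x' - xb)‖ ≤ (ε / (‖y‖ + 1)) * ‖x' - xb‖ := by
        have h := hd.isLittleO
        exact h.def (by positivity)
      rw [Metric.eventually_nhds_iff] at hlo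
      obtain ⟨δ, hδ, hball⟩ := hlo
      refine ⟨δ / 2, by positivity, ?_⟩
      rintro ⟨z, uz⟩ ⟨hzX, hzF⟩ hdist
      have hzF' : uz = F z := hzF
      subst hzF'
      have hfst : ‖z - xb‖ ≤ δ / 2 := by
        have h1 : ‖((z, F z) - (xb, F xb)).1‖ ≤ ‖(z, F z) - (xb, F xb)‖ := norm_fst_le _
        simpa using h1.trans hdist
      have hzd : dist z xb < δ := by
        rw [dist_eq_norm]
        linarith
      have hkey := hball hzd
      have hinner : ⟪ContinuousLinearMap.adjoint A y, z - xb⟫ + ⟪-y, F z - F xb⟫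
          = ⟪y, A (z - xb) - (F z - F xb)⟫ := by
        rw [ContinuousLinearMap.adjoint_inner_left, inner_neg_left]
        simp only [inner_sub_right]
        ring
      have hbound : ⟪y, A (z - xb) - (F z - F xb)⟫ ≤ ε * ‖z - xb‖ := by
        have h1 := real_inner_le_norm y (A (z - xb) - (F z - F xb))
        have h2 : ‖A (z - xb) - (F z - F xb)‖ = ‖F z - F xb - A (z - xb)‖ := by
          rw [← norm_neg]; congr 1; abel
        have h3 : ‖y‖ * ((ε / (‖y‖ + 1)) * ‖z - xb‖) ≤ ε * ‖z - xb‖ := by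
          rw [div_mul_eq_mul_div, mul_div_assoc']
          rw [div_le_iff₀ (by positivity)]
          have := norm_nonneg (z - xb)
          nlinarith [norm_nonneg y]
        calc ⟪y, A (z - xb) - (F z - F xb)⟫ ≤ ‖y‖ * ‖A (z - xb) - (F z - F xb)‖ := h1
          _ = ‖y‖ * ‖F z - F xb - A (z - xb)‖ := by rw [h2]
          _ ≤ ‖y‖ * ((ε / (‖y‖ + 1)) * ‖z - xb‖) :=
              mul_le_mul_of_nonneg_left hkey (norm_nonneg y)
          _ ≤ ε * ‖z - xb‖ := h3
      have hfin : ε * ‖z - xb‖ ≤ ε * ‖(z, F z) - (xb, F xb)‖ := by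
        apply mul_le_mul_of_nonneg_left _ (le_of_lt hε)
        have h1 : ‖((z, F z) - (xb, F xb)).1‖ ≤ ‖(z, F z) - (xb, F xb)‖ := norm_fst_le _
        simpa using h1
      simp only
      rw [hinner]
      exact hbound.trans hfin
    · -- projection membership
      intro k
      rw [tangCone_affine B b xb hxb, hKset, projSet_submodule]
      exact Set.mem_singleton _
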